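/- Let L ∈ ℕ ∪ {∞}, let a < b < c be real numbers, and let f, g : ℝ → ℝ be such that f is C^L on [a,b] and g is C^L on [b,c] (in the sense of ContDiffOn, with one-sided derivatives at the endpoints). Suppose that for every natural number k with k ≤ L, the k-th iterated derivative of f within [a,b] at b equals the k-th iterated derivative of g within [b,c] at b. Then the concatenated function h, defined by h(t) = f(t) for t ∈ [a,b] and h(t) = g(t) for t ∈ (b,c], is C^L on [a,c]. -/

import Mathlib

noncomputable section

open Set Filter Topology
open scoped ContDiff

private lemma continuousOn_union_closed {α β : Type*} [TopologicalSpace α] [TopologicalSpace β]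
    {s t : Set α} {f : α → β} (hs : IsClosed s) (ht : IsClosed t)
    (hfs : ContinuousOn f s) (hft : ContinuousOn f t) : ContinuousOn f (s ∪ t) := by
  intro x hx
  refine ContinuousWithinAt.union ?_ ?_
  · by_cases hxs : x ∈ s
    · exact hfs x hxs
    · exact continuousWithinAt_of_notMem_closure (by rwa [hs.closure_eq])
  · by_cases hxt : x ∈ t
    · exact hft x hxt
    · exact continuousWithinAt_of_notMem_closure (by rwa [ht.closure_eq])

private lemma glue_aux (a b c : ℝ) (hab : a < b) (hbc : b < c) :
    ∀ n : ℕ, ∀ f g : ℝ → ℝ,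
      ContDiffOn ℝ n f (Set.Icc a b) → ContDiffOn ℝ n g (Set.Icc b c) →
      (∀ k : ℕ, k ≤ n →
        iteratedDerivWithin k f (Set.Icc a b) b = iteratedDerivWithin k g (Set.Icc b c) b) →
      ContDiffOn ℝ n (fun t => if t ≤ b then f t else g t) (Set.Icc a c) := by
  intro n
  induction n with
  | zero =>
    intro f g hf hg hjet
    have hval : f b = g b := by
      have := hjet 0 le_rfl
      simpa [iteratedDerivWithin_zero] using this
    rw [show ((0 : ℕ) : WithTop ℕ∞) = 0 by norm_cast, contDiffOn_zero]
    rw [← Set.Icc_union_Icc_eq_Icc hab.le hbc.le]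
    refine continuousOn_union_closed isClosed_Icc isClosed_Icc ?_ ?_
    · exact (hf.continuousOn.congr (fun t ht => if_pos ht.2))
    · refine hg.continuousOn.congr (fun t ht => ?_)
      by_cases h : t ≤ b
      · have : t = b := le_antisymm h ht.1
        simp [this, hval]
      · simp [h]
  | succ n IH =>
    intro f g hf hg hjet
    have hac : a < c := hab.trans hbc
    have hcast : ((n + 1 : ℕ) : WithTop ℕ∞) = (n : WithTop ℕ∞) + 1 := by push_cast; ring
    have hf1 : DifferentiableOn ℝ f (Icc a b) :=
      hf.differentiableOn (by rw [hcast]; simp)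
    have hg1 : DifferentiableOn ℝ g (Icc b c) :=
      hg.differentiableOn (by rw [hcast]; simp)
    have hval : f b = g b := by
      have := hjet 0 (Nat.zero_le _)
      simpa [iteratedDerivWithin_zero] using this
    set H : ℝ → ℝ := fun t => if t ≤ b then f t else g t with hH
    set d : ℝ → ℝ :=
      fun t => if t ≤ b then derivWithin f (Icc a b) t else derivWithin g (Icc b c) t with hd
    have hEqF : Set.EqOn H f (Icc a b) := fun t ht => if_pos ht.2
    have hEqG : Set.EqOn H g (Icc b c) := by
      intro t ht
      by_cases h : t ≤ b
      · have : t = b := le_antisymm h ht.1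
        simp [hH, this, hval]
      · simp [hH, h]
    -- derivative jet matching at b
    have hD : derivWithin g (Icc b c) b = derivWithin f (Icc a b) b := by
      have h1 := hjet 1 (by omega)
      rw [iteratedDerivWithin_one,
        iteratedDerivWithin_one] at h1
      exact h1.symm
    have key : ∀ t ∈ Icc a c, HasDerivWithinAt H (d t) (Icc a c) t := by
      intro t ht
      rcases lt_trichotomy t b with htb | htb | htb
      · -- t < b
        have hset : Icc a b =ᶠ[𝓝 t] Icc a c := by
          rw [Filter.eventuallyEq_set]
          filter_upwards [Iio_mem_nhds htb] with x hx
          constructor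
          · rintro ⟨h1, h2⟩; exact ⟨h1, h2.trans hbc.le⟩
          · rintro ⟨h1, _⟩; exact ⟨h1, (le_of_lt hx)⟩
        have h1 : HasDerivWithinAt f (derivWithin f (Icc a b) t) (Icc a b) t :=
          (hf1 t ⟨ht.1, htb.le⟩).hasDerivWithinAt
        have h2 : HasDerivWithinAt f (derivWithin f (Icc a b) t) (Icc a c) t :=
          h1.congr_set hset
        have h3 : HasDerivWithinAt H (derivWithin f (Icc a b) t) (Icc a c) t := by
          refine h2.congr_of_eventuallyEq ?_ (if_pos htb.le)
          filter_upwards [mem_nhdsWithin_of_mem_nhds (Iio_mem_nhds htb)] with x hx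
          exact if_pos hx.le
        simpa [hd, htb.le] using h3
      · -- t = b
        subst htb
        have hfb := ((hf1 t ⟨hab.le, le_rfl⟩).hasDerivWithinAt).congr hEqF (hEqF ⟨hab.le, le_rfl⟩)
        have hgb := ((hg1 t ⟨le_rfl, hbc.le⟩).hasDerivWithinAt).congr hEqG (hEqG ⟨le_rfl, hbc.le⟩)
        rw [hD] at hgb
        have huni := hfb.union hgb
        rw [Set.Icc_union_Icc_eq_Icc hab.le hbc.le] at huni
        simpa [hd] using huni
      · -- b < t
        have hset : Icc b c =ᶠ[𝓝 t] Icc a c := by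
          rw [Filter.eventuallyEq_set]
          filter_upwards [Ioi_mem_nhds htb] with x hx
          constructor
          · rintro ⟨_, h2⟩; exact ⟨hab.le.trans (le_of_lt hx), h2⟩
          · rintro ⟨_, h2⟩; exact ⟨le_of_lt hx, h2⟩
        have h1 : HasDerivWithinAt g (derivWithin g (Icc b c) t) (Icc b c) t :=
          (hg1 t ⟨htb.le, ht.2⟩).hasDerivWithinAt
        have h2 : HasDerivWithinAt g (derivWithin g (Icc b c) t) (Icc a c) t :=
          h1.congr_set hset
        have h3 : HasDerivWithinAt H (derivWithin g (Icc b c) t) (Icc a c) t := by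
          refine h2.congr_of_eventuallyEq ?_ (if_neg (not_le.2 htb))
          filter_upwards [mem_nhdsWithin_of_mem_nhds (Ioi_mem_nhds htb)] with x hx
          exact if_neg (not_le.2 hx)
        simpa [hd, not_le.2 htb] using h3
    -- lower smoothness of the glued derivative
    have hf' : ContDiffOn ℝ n (derivWithin f (Icc a b)) (Icc a b) := by
      have := (contDiffOn_succ_iff_derivWithin (uniqueDiffOn_Icc hab)).mp (by rwa [hcast] at hf)
      exact this.2.2
    have hg' : ContDiffOn ℝ n (derivWithin g (Icc b c)) (Icc b c) := by
      have := (contDiffOn_succ_iff_derivWithin (uniqueDiffOn_Icc hbc)).mp (by rwa [hcast] at hg)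
      exact this.2.2
    have hjet' : ∀ k : ℕ, k ≤ n →
        iteratedDerivWithin k (derivWithin f (Icc a b)) (Icc a b) b =
          iteratedDerivWithin k (derivWithin g (Icc b c)) (Icc b c) b := by
      intro k hk
      rw [← iteratedDerivWithin_succ',
        ← iteratedDerivWithin_succ']
      exact hjet (k + 1) (by omega)
    have hIH := IH _ _ hf' hg' hjet'
    rw [hcast, contDiffOn_succ_iff_derivWithin (uniqueDiffOn_Icc hac)]
    refine ⟨fun t ht => (key t ht).differentiableWithinAt, by simp, ?_⟩
    exact hIH.congr (fun t ht => (key t ht).derivWithin (uniqueDiffOn_Icc hac t ht))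

/-- Let `L ∈ ℕ ∪ {∞}`, `a < b < c`, and let `f` be `C^L` on `[a,b]`
and `g` be `C^L` on `[b,c]` (one-sided derivatives at the endpoints). If for every
`k ≤ L` the `k`-th iterated derivative of `f` within `[a,b]` at `b` equals the `k`-th
iterated derivative of `g` within `[b,c]` at `b`, then the concatenation
`h t = f t` for `t ≤ b`, `h t = g t` for `t > b`, is `C^L` on `[a,c]`. -/
theorem contDiffOn_concat (L : ℕ∞) (a b c : ℝ) (hab : a < b) (hbc : b < c)
    (f g : ℝ → ℝ)
    (hf : ContDiffOn ℝ L f (Set.Icc a b)) (hg : ContDiffOn ℝ L g (Set.Icc b c))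
    (hjet : ∀ k : ℕ, (k : ℕ∞) ≤ L →
      iteratedDerivWithin k f (Set.Icc a b) b = iteratedDerivWithin k g (Set.Icc b c) b) :
    ContDiffOn ℝ L (fun t => if t ≤ b then f t else g t) (Set.Icc a c) := by
  induction L using ENat.recTopCoe with
  | top =>
    rw [show ((⊤ : ℕ∞) : WithTop ℕ∞) = ∞ from rfl, contDiffOn_infty] at hf hg ⊢
    intro n
    exact glue_aux a b c hab hbc n f g (hf n) (hg n) (fun k _ => hjet k le_top)
  | coe m =>
    exact glue_aux a b c hab hbc m f g hf hg (fun k hk => hjet k (by exact_mod_cast hk))
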